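/- Let F : ℝ^d → ℝ^d be continuous, monotone (i.e. (F(a₁) − F(a₂))·(a₁ − a₂) ≥ 0 for all a₁, a₂), and coercive in the sense that F(a)·a/|a| → ∞ as |a| → ∞. Then there exists a ∈ ℝ^d with F(a) = 0. -/

import Mathlib

open Filter Topology

open RealInnerProductSpace Submodule Module

set_option maxHeartbeats 1000000

/-- Every continuous strongly monotone map on a finite-dimensional real inner product
space has a zero. Proved by induction on the dimension. -/
theorem strong_mono_has_zero (n : ℕ) :
    ∀ (E : Type) [NormedAddCommGroup E] [InnerProductSpace ℝ E] [FiniteDimensional ℝ E],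
      finrank ℝ E = n →
      ∀ F : E → E, Continuous F →
        (∀ a b : E, ‖a - b‖ ^ 2 ≤ ⟪F a - F b, a - b⟫) →
        ∃ x, F x = 0 := by
  induction n with
  | zero =>
      intro E _ _ _ hrank F _ _
      have : Subsingleton E := Module.finrank_zero_iff.mp hrank
      exact ⟨0, Subsingleton.elim _ _⟩
  | succ n ih =>
      intro E _ _ _ hrank F hF hm
      have hnt : Nontrivial E := Module.finrank_pos_iff (R := ℝ).mp (by omega)
      obtain ⟨v, hv⟩ := exists_ne (0 : E)
      set e : E := ‖v‖⁻¹ • v with he_def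
      have he : ‖e‖ = 1 := norm_smul_inv_norm hv
      have he0 : e ≠ 0 := by
        intro h; rw [h, norm_zero] at he; norm_num at he
      set K : Submodule ℝ E := (ℝ ∙ e)ᗮ with hK_def
      -- elements of K are orthogonal to e
      have hKe : ∀ w : K, ⟪(w : E), e⟫ = 0 := by
        intro w
        have h : (w : E) ∈ (ℝ ∙ e)ᗮ := w.2
        rw [Submodule.mem_orthogonal] at h
        have h2 := h e (Submodule.mem_span_singleton_self e)
        rwa [real_inner_comm] at h2
      have hrankK : finrank ℝ K = n := by
        show finrank ℝ ((ℝ ∙ e)ᗮ : Submodule ℝ E) = n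
        have h1 : finrank ℝ (ℝ ∙ e : Submodule ℝ E) = 1 := finrank_span_singleton he0
        have h2 := Submodule.finrank_add_finrank_orthogonal (𝕜 := ℝ) (ℝ ∙ e : Submodule ℝ E)
        rw [h1, hrank] at h2
        omega
      set P := orthogonalProjection K with hP_def
      -- the family of maps on K
      set G : ℝ → K → K := fun t u => P (F ((u : E) + t • e)) with hG_def
      -- inner product against members of K sees only the projection
      have hPinner : ∀ (x : E) (w : K), ⟪x, (w : E)⟫ = ⟪((P x : K) : E), (w : E)⟫ := by
        intro x w
        have h0 : ⟪x - (P x : E), (w : E)⟫ = 0 :=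
          Submodule.starProjection_inner_eq_zero x w w.2
        rw [inner_sub_left] at h0
        linarith
      -- existence of a zero of G t, for every t
      have hGzero : ∀ t : ℝ, ∃ u : K, G t u = 0 := by
        intro t
        apply ih K hrankK (G t)
        · exact (orthogonalProjection K).continuous.comp
            (hF.comp ((continuous_subtype_val).add continuous_const))
        · intro u u'
          have key := hm ((u : E) + t • e) ((u' : E) + t • e)
          have hab : ((u : E) + t • e) - ((u' : E) + t • e) = ((u - u' : K) : E) := by
            push_cast
            module
          rw [hab] at key
          have hsub : (G t u - G t u' : K) =
              P (F ((u : E) + t • e) - F ((u' : E) + t • e)) := (map_sub P _ _).symm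
          calc ‖u - u'‖ ^ 2 = ‖((u - u' : K) : E)‖ ^ 2 := by rw [Submodule.coe_norm]
            _ ≤ ⟪F ((u : E) + t • e) - F ((u' : E) + t • e), ((u - u' : K) : E)⟫ := key
            _ = ⟪((G t u - G t u' : K) : E), ((u - u' : K) : E)⟫ := by
                rw [hsub]; exact hPinner _ _
            _ = ⟪G t u - G t u', u - u'⟫ := (Submodule.coe_inner _ _ _).symm
      choose u hu using hGzero
      set ψ : ℝ → ℝ := fun t => ⟪F ((u t : E) + t • e), e⟫ with hψ_def
      -- the key inequality
      have key : ∀ t t' : ℝ,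
          ‖u t - u t'‖ ^ 2 + (t - t') ^ 2 ≤ (ψ t - ψ t') * (t - t') := by
        intro t t'
        set a := (u t : E) + t • e with ha_def
        set b := (u t' : E) + t' • e with hb_def
        have hab : a - b = ((u t - u t' : K) : E) + (t - t') • e := by
          rw [ha_def, hb_def]
          push_cast
          module
        have hmab := hm a b
        -- compute ‖a - b‖²
        have hna : ‖a - b‖ ^ 2 = ‖u t - u t'‖ ^ 2 + (t - t') ^ 2 := by
          rw [hab, norm_add_sq_real, real_inner_smul_right, hKe, norm_smul, he,
            Real.norm_eq_abs, ← Submodule.coe_norm]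
          rw [mul_one, sq_abs]
          ring
        -- compute the inner product
        have hinner : ⟪F a - F b, a - b⟫ = (ψ t - ψ t') * (t - t') := by
          rw [hab, inner_add_right, real_inner_smul_right]
          have h1 : ⟪F a - F b, ((u t - u t' : K) : E)⟫ = 0 := by
            rw [hPinner (F a - F b) (u t - u t')]
            have hGG : (P (F a - F b) : K) = G t (u t) - G t' (u t') := map_sub P _ _
            rw [hGG, hu, hu, sub_zero]
            simp
          have h2 : ⟪F a - F b, e⟫ = ψ t - ψ t' := by
            rw [inner_sub_left]
          rw [h1, h2]; ring
        rw [← hna, ← hinner]; exact hmab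
      -- ψ is monotone
      have hψmono : Monotone ψ := by
        intro s t hst
        rcases eq_or_lt_of_le hst with h | h
        · rw [h]
        · have := key t s
          nlinarith [sq_nonneg (t - s), norm_nonneg (u t - u s)]
      -- u is continuous
      have hucont : Continuous u := by
        rw [continuous_iff_continuousAt]
        intro t₀
        rw [Metric.continuousAt_iff]
        intro ε hε
        obtain ⟨M, hM_def⟩ : ∃ M, M = ψ (t₀ + 1) - ψ (t₀ - 1) := ⟨_, rfl⟩
        have hM0 : 0 ≤ M := by
          have := hψmono (by linarith : t₀ - 1 ≤ t₀ + 1)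
          rw [hM_def]; linarith
        refine ⟨min 1 (ε ^ 2 / (M + 1)),
          lt_min one_pos (div_pos (pow_pos hε 2) (by linarith)), ?_⟩
        intro t ht
        have ht1 : |t - t₀| < 1 :=
          lt_of_lt_of_le (by simpa [Real.dist_eq] using ht) (min_le_left _ _)
        have ht2 : |t - t₀| < ε ^ 2 / (M + 1) :=
          lt_of_lt_of_le (by simpa [Real.dist_eq] using ht) (min_le_right _ _)
        have hψbound : |ψ t - ψ t₀| ≤ M := by
          obtain ⟨hl', hr'⟩ := abs_lt.mp ht1
          have hl : ψ (t₀ - 1) ≤ ψ t := hψmono (by linarith)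
          have hr : ψ t ≤ ψ (t₀ + 1) := hψmono (by linarith)
          have hl0 : ψ (t₀ - 1) ≤ ψ t₀ := hψmono (by linarith)
          have hr0 : ψ t₀ ≤ ψ (t₀ + 1) := hψmono (by linarith)
          rw [abs_le, hM_def]; constructor <;> linarith
        have hsq : ‖u t - u t₀‖ ^ 2 ≤ M * |t - t₀| := by
          have hk := key t t₀
          have hup : (ψ t - ψ t₀) * (t - t₀) ≤ M * |t - t₀| := by
            calc (ψ t - ψ t₀) * (t - t₀) ≤ |(ψ t - ψ t₀) * (t - t₀)| := le_abs_self _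
              _ = |ψ t - ψ t₀| * |t - t₀| := abs_mul _ _
              _ ≤ M * |t - t₀| := mul_le_mul_of_nonneg_right hψbound (abs_nonneg _)
          nlinarith [sq_nonneg (t - t₀)]
        have hlt : ‖u t - u t₀‖ ^ 2 < ε ^ 2 := by
          calc ‖u t - u t₀‖ ^ 2 ≤ M * |t - t₀| := hsq
            _ ≤ M * (ε ^ 2 / (M + 1)) := mul_le_mul_of_nonneg_left (le_of_lt ht2) hM0
            _ < ε ^ 2 := by
                rw [mul_div_assoc', div_lt_iff₀ (by linarith)]
                nlinarith [pow_pos hε 2]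
        rw [dist_eq_norm]
        exact lt_of_pow_lt_pow_left₀ 2 (le_of_lt hε) hlt
      -- ψ is continuous
      have hψcont : Continuous ψ := by
        apply Continuous.inner _ continuous_const
        exact hF.comp ((continuous_subtype_val.comp hucont).add
          (continuous_id.smul continuous_const))
      -- ψ crosses zero
      obtain ⟨T, hT_def⟩ : ∃ T, T = |ψ 0| + 1 := ⟨_, rfl⟩
      have hT0 : 0 < T := by
        have := abs_nonneg (ψ 0); rw [hT_def]; linarith
      have hψT : 1 ≤ ψ T := by
        have hk := key T 0
        have habs : -|ψ 0| ≤ ψ 0 := neg_abs_le _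
        nlinarith [norm_nonneg (u T - u 0), sq_nonneg (‖u T - u 0‖)]
      have hψnT : ψ (-T) ≤ -1 := by
        have hk := key (-T) 0
        have habs : ψ 0 ≤ |ψ 0| := le_abs_self _
        nlinarith [norm_nonneg (u (-T) - u 0), sq_nonneg (‖u (-T) - u 0‖)]
      have hsub := intermediate_value_Icc (by linarith : -T ≤ T) hψcont.continuousOn
      have h0mem : (0 : ℝ) ∈ Set.Icc (ψ (-T)) (ψ T) := ⟨by linarith, by linarith⟩
      obtain ⟨t₀, _, ht₀⟩ := hsub h0mem
      refine ⟨(u t₀ : E) + t₀ • e, ?_⟩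
      set x := (u t₀ : E) + t₀ • e with hx_def
      have hproj : (P (F x) : K) = 0 := hu t₀
      have hinner : ⟪F x, e⟫ = 0 := ht₀
      have hmemo : F x ∈ Kᗮ := by
        have hh : F x - (orthogonalProjection K (F x) : E) ∈ Kᗮ :=
          Submodule.sub_starProjection_mem_orthogonal (K := K) (F x)
        rw [show (orthogonalProjection K (F x) : E) = ((P (F x) : K) : E) from rfl,
          hproj] at hh
        simpa using hh
      have hKoo : Kᗮ = (ℝ ∙ e) := by
        rw [hK_def, Submodule.orthogonal_orthogonal]
      rw [hKoo, Submodule.mem_span_singleton] at hmemo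
      obtain ⟨c, hc⟩ := hmemo
      have hc0 : c = 0 := by
        have h := hinner
        rw [← hc, real_inner_smul_left, real_inner_self_eq_norm_sq, he] at h
        simpa using h
      rw [← hc, hc0, zero_smul]

theorem stmt_17 (d : ℕ) (F : EuclideanSpace ℝ (Fin d) → EuclideanSpace ℝ (Fin d))
    (hcont : Continuous F)
    (hmono : ∀ a₁ a₂, (0:ℝ) ≤ inner ℝ (F a₁ - F a₂) (a₁ - a₂))
    (hcoercive : Tendsto (fun a : EuclideanSpace ℝ (Fin d) => (inner ℝ (F a) a : ℝ) / ‖a‖)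
      (cocompact _) atTop) :
    ∃ a, F a = 0 := by
  -- outside some compact set, ⟪F a, a⟫ / ‖a‖ ≥ 1
  have hev : ∀ᶠ a in cocompact (EuclideanSpace ℝ (Fin d)),
      1 ≤ (inner ℝ (F a) a : ℝ) / ‖a‖ := hcoercive.eventually (eventually_ge_atTop 1)
  obtain ⟨K, hKc, hKsub⟩ := (Filter.hasBasis_cocompact).eventually_iff.mp hev
  -- for each n, solve (n+1) • F x + x = 0
  have hzero : ∀ n : ℕ, ∃ x, (n + 1 : ℝ) • F x + x = 0 := by
    intro n
    apply strong_mono_has_zero d (EuclideanSpace ℝ (Fin d)) finrank_euclideanSpace_fin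
    · fun_prop
    · intro a b
      have h1 := hmono a b
      have h2 : ((n + 1 : ℝ) • F a + a) - ((n + 1 : ℝ) • F b + b)
          = (n + 1 : ℝ) • (F a - F b) + (a - b) := by module
      rw [h2, inner_add_left, real_inner_smul_left, real_inner_self_eq_norm_sq]
      nlinarith [h1]
  choose x hx using hzero
  have hFx : ∀ n : ℕ, F (x n) = -(((n : ℝ) + 1)⁻¹) • x n := by
    intro n
    have hn1 : ((n : ℝ) + 1) ≠ 0 := by positivity
    have h := hx n
    have h2 : ((n : ℝ) + 1) • F (x n) = -(x n) := by
      rw [← eq_neg_of_add_eq_zero_left h]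
    have := congrArg (fun y => ((n : ℝ) + 1)⁻¹ • y) h2
    simp only [smul_smul, inv_mul_cancel₀ hn1, one_smul] at this
    rw [this, smul_neg, neg_smul]
  have hmem : ∀ n : ℕ, x n ∈ K := by
    intro n
    by_contra hnK
    have h1 : 1 ≤ (inner ℝ (F (x n)) (x n) : ℝ) / ‖x n‖ := hKsub (by exact hnK)
    have h2 : (inner ℝ (F (x n)) (x n) : ℝ) ≤ 0 := by
      rw [hFx n, inner_smul_left]
      simp only [RCLike.star_def, conj_trivial]
      rw [real_inner_self_eq_norm_sq]
      have : (0:ℝ) ≤ ((n : ℝ) + 1)⁻¹ := by positivity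
      nlinarith [sq_nonneg ‖x n‖]
    have h3 : (inner ℝ (F (x n)) (x n) : ℝ) / ‖x n‖ ≤ 0 :=
      div_nonpos_of_nonpos_of_nonneg h2 (norm_nonneg _)
    linarith
  obtain ⟨xbar, hxbarK, φ, hφ, hconv⟩ := hKc.tendsto_subseq hmem
  have h1 : Tendsto (fun m => F (x (φ m))) atTop (𝓝 (F xbar)) :=
    (hcont.tendsto xbar).comp hconv
  -- bound on K
  obtain ⟨C, hC⟩ := hKc.isBounded.subset_closedBall 0
  have hCnn : 0 ≤ C := by
    have := hC hxbarK
    rw [Metric.mem_closedBall] at this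
    exact le_trans dist_nonneg this
  have h2 : Tendsto (fun m => F (x (φ m))) atTop (𝓝 0) := by
    refine squeeze_zero_norm (f := fun m => F (x (φ m))) (a := fun m => C * ((m : ℝ) + 1)⁻¹) (fun m => ?_) ?_
    · 
      rw [hFx (φ m)]
      rw [norm_smul, norm_neg, norm_inv, Real.norm_eq_abs]
      have hb : ‖x (φ m)‖ ≤ C := by
        have := hC (hmem (φ m))
        rwa [Metric.mem_closedBall, dist_zero_right] at this
      have hφm : (m : ℝ) + 1 ≤ (φ m : ℝ) + 1 := by
        have h := hφ.le_apply (x := m)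
        have : (m : ℝ) ≤ (φ m : ℝ) := by exact_mod_cast h
        linarith
      have habs : |((φ m : ℝ) + 1)| = (φ m : ℝ) + 1 := abs_of_pos (by positivity)
      rw [habs]
      have hinv : ((φ m : ℝ) + 1)⁻¹ ≤ ((m : ℝ) + 1)⁻¹ :=
        inv_anti₀ (by positivity) hφm
      calc ((φ m : ℝ) + 1)⁻¹ * ‖x (φ m)‖ ≤ ((m : ℝ) + 1)⁻¹ * C := by
            apply mul_le_mul hinv hb (norm_nonneg _) (by positivity)
        _ = C * ((m : ℝ) + 1)⁻¹ := by ring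
    · have hh : Tendsto (fun m : ℕ => ((m : ℝ) + 1)⁻¹) atTop (𝓝 0) := by
        simpa [one_div] using tendsto_one_div_add_atTop_nhds_zero_nat (𝕜 := ℝ)
      simpa using hh.const_mul C
  exact ⟨xbar, tendsto_nhds_unique h1 h2⟩
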